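/- Let φ and ψ be dual frames for H with upper bounds B_φ, B_ψ, and let m ∈ ℓ^∞ be a real sequence with s = sup_n m_n and i = inf_n m_n. Then the spectrum of M_{m,φ,ψ} is contained in the closed disk centered at (s + i)/2 with radius ((s − i)/2) · B_φ^{1/2} · B_ψ^{1/2}. -/

import Mathlib

open scoped InnerProductSpace

/-- Cauchy–Schwarz for infinite sums of nonnegative reals. -/
lemma cs_tsum_aux (u v : ℕ → ℝ) (hu : ∀ n, 0 ≤ u n) (hv : ∀ n, 0 ≤ v n)
    (hU : Summable (fun n => u n ^ 2)) (hV : Summable (fun n => v n ^ 2)) :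
    Summable (fun n => u n * v n) ∧
      (∑' n, u n * v n) ≤ Real.sqrt (∑' n, u n ^ 2) * Real.sqrt (∑' n, v n ^ 2) := by
  have hsum : Summable (fun n => u n * v n) := by
    refine Summable.of_nonneg_of_le (fun n => mul_nonneg (hu n) (hv n))
      (fun n => ?_) ((hU.add hV).div_const 2)
    have := two_mul_le_add_sq (u n) (v n)
    nlinarith
  refine ⟨hsum, hsum.tsum_le_of_sum_le (fun F => ?_)⟩
  calc ∑ n ∈ F, u n * v n
      ≤ Real.sqrt (∑ n ∈ F, u n ^ 2) * Real.sqrt (∑ n ∈ F, v n ^ 2) :=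
        Real.sum_mul_le_sqrt_mul_sqrt F u v
    _ ≤ Real.sqrt (∑' n, u n ^ 2) * Real.sqrt (∑' n, v n ^ 2) := by
        gcongr
        · exact hU.sum_le_tsum F (fun n _ => sq_nonneg _)
        · exact hV.sum_le_tsum F (fun n _ => sq_nonneg _)

/-- for dual frames and a real bounded symbol with `s = sup m`, `i = inf m`,
the spectrum of the multiplier lies in the closed disk centered at `(s+i)/2` of radius
`((s-i)/2)·Bφ^(1/2)·Bψ^(1/2)`. -/
theorem spectrum_dual_frames_multiplier_real_symbol_subset_disk
    {H : Type*} [NormedAddCommGroup H] [InnerProductSpace ℂ H] [CompleteSpace H]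
    (φ ψ : ℕ → H) (Aφ Bφ Aψ Bψ : ℝ) (hAφ : 0 < Aφ) (hAψ : 0 < Aψ)
    (hφ : ∀ f : H, ∃ s : ℝ, HasSum (fun n => ‖⟪φ n, f⟫_ℂ‖ ^ 2) s ∧
      Aφ * ‖f‖ ^ 2 ≤ s ∧ s ≤ Bφ * ‖f‖ ^ 2)
    (hψ : ∀ f : H, ∃ s : ℝ, HasSum (fun n => ‖⟪ψ n, f⟫_ℂ‖ ^ 2) s ∧
      Aψ * ‖f‖ ^ 2 ≤ s ∧ s ≤ Bψ * ‖f‖ ^ 2)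
    (hdual : ∀ f : H, HasSum (fun n => ⟪ψ n, f⟫_ℂ • φ n) f)
    (m : ℕ → ℝ) (hm : ∃ C : ℝ, ∀ n, |m n| ≤ C)
    (s i : ℝ) (hs : s = ⨆ n, m n) (hi : i = ⨅ n, m n)
    (M : H →L[ℂ] H)
    (hM : ∀ f : H, HasSum (fun n => ((m n : ℂ) * ⟪ψ n, f⟫_ℂ) • φ n) (M f)) :
    spectrum ℂ M ⊆
      Metric.closedBall (((s + i) / 2 : ℝ) : ℂ)
        (((s - i) / 2) * Real.sqrt Bφ * Real.sqrt Bψ) := by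
  obtain ⟨C, hC⟩ := hm
  set c : ℝ := (s + i) / 2 with hc
  set r : ℝ := ((s - i) / 2) * Real.sqrt Bφ * Real.sqrt Bψ with hr
  -- bounds on m
  have hbddA : BddAbove (Set.range m) := ⟨C, by rintro _ ⟨n, rfl⟩; exact (abs_le.1 (hC n)).2⟩
  have hbddB : BddBelow (Set.range m) := ⟨-C, by rintro _ ⟨n, rfl⟩; exact (abs_le.1 (hC n)).1⟩
  have hms : ∀ n, m n ≤ s := fun n => hs ▸ le_ciSup hbddA n
  have hmi : ∀ n, i ≤ m n := fun n => hi ▸ ciInf_le hbddB n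
  have his : i ≤ s := (hmi 0).trans (hms 0)
  have hmc : ∀ n, |m n - c| ≤ (s - i) / 2 := by
    intro n
    rw [abs_le]
    constructor <;> [linarith [hmi n]; linarith [hms n]]
  have hr0 : 0 ≤ r := by
    apply mul_nonneg (mul_nonneg (by linarith) (Real.sqrt_nonneg _)) (Real.sqrt_nonneg _)
  -- the shifted operator
  set T : H →L[ℂ] H := M - algebraMap ℂ (H →L[ℂ] H) (c : ℂ) with hT
  -- norm bound ‖T f‖ ≤ r * ‖f‖
  have hTf : ∀ f : H, ‖T f‖ ≤ r * ‖f‖ := by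
    intro f
    set x : H := T f with hx
    have hx' : x = M f - (c : ℂ) • f := by
      simp [hx, hT, ContinuousLinearMap.sub_apply, Algebra.algebraMap_eq_smul_one]
    -- HasSum expansion of x
    have h1 : HasSum (fun n => (((m n : ℂ) - (c : ℂ)) * ⟪ψ n, f⟫_ℂ) • φ n) x := by
      have h2 : HasSum (fun n => ((c : ℂ) * ⟪ψ n, f⟫_ℂ) • φ n) ((c : ℂ) • f) := by
        have := (hdual f).const_smul (c : ℂ)
        simpa [smul_smul] using this
      have := (hM f).sub h2
      rw [← hx'] at this
      convert this using 2 with n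
      rw [← sub_smul, sub_mul]
    -- pair with x
    have h2 : HasSum (fun n => ((innerSL ℂ x) : H →L[ℂ] ℂ)
        ((((m n : ℂ) - (c : ℂ)) * ⟪ψ n, f⟫_ℂ) • φ n)) ((innerSL ℂ x) x) :=
      (innerSL ℂ x).hasSum h1
    have h2' : HasSum (fun n => (((m n : ℂ) - (c : ℂ)) * ⟪ψ n, f⟫_ℂ) * ⟪x, φ n⟫_ℂ)
        (⟪x, x⟫_ℂ) := by
      simpa [innerSL_apply_apply, inner_smul_right, mul_comm] using h2
    -- ℓ² data
    obtain ⟨Sψ, hSψ, _, hSψB⟩ := hψ f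
    obtain ⟨Sφ, hSφ, _, hSφB⟩ := hφ x
    set u : ℕ → ℝ := fun n => ‖⟪ψ n, f⟫_ℂ‖ with hu
    set v : ℕ → ℝ := fun n => ‖⟪φ n, x⟫_ℂ‖ with hv
    obtain ⟨hsumuv, hcs⟩ := cs_tsum_aux u v (fun n => norm_nonneg _) (fun n => norm_nonneg _)
      hSψ.summable hSφ.summable
    have hSψ0 : 0 ≤ Sψ := hSψ.nonneg (fun n => sq_nonneg _)
    have hSφ0 : 0 ≤ Sφ := hSφ.nonneg (fun n => sq_nonneg _)
    -- term norms
    have hterm : ∀ n, ‖(((m n : ℂ) - (c : ℂ)) * ⟪ψ n, f⟫_ℂ) * ⟪x, φ n⟫_ℂ‖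
        ≤ ((s - i) / 2) * (u n * v n) := by
      intro n
      have h3 : ‖⟪x, φ n⟫_ℂ‖ = v n := by rw [hv]; exact norm_inner_symm x (φ n)
      have h4 : ‖((m n : ℂ) - (c : ℂ))‖ = |m n - c| := by
        rw [← Complex.ofReal_sub, Complex.norm_real, Real.norm_eq_abs]
      rw [norm_mul, norm_mul, h3, h4]
      have := hmc n
      have h5 : 0 ≤ u n * v n := mul_nonneg (norm_nonneg _) (norm_nonneg _)
      calc |m n - c| * u n * v n ≤ ((s - i) / 2) * u n * v n := by
            gcongr
        _ = ((s - i) / 2) * (u n * v n) := by ring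
    -- summability of norms
    have hsumnorm : Summable (fun n => ‖(((m n : ℂ) - (c : ℂ)) * ⟪ψ n, f⟫_ℂ) * ⟪x, φ n⟫_ℂ‖) :=
      Summable.of_nonneg_of_le (fun n => norm_nonneg _) hterm (hsumuv.mul_left _)
    -- the key inequality
    have hkey : ‖x‖ ^ 2 ≤ r * ‖f‖ * ‖x‖ := by
      have e1 : ‖x‖ ^ 2 = ‖(⟪x, x⟫_ℂ)‖ := by
        rw [inner_self_eq_norm_sq_to_K]
        simp [← Complex.ofReal_pow]
      rw [e1, ← h2'.tsum_eq]
      calc ‖∑' n, (((m n : ℂ) - (c : ℂ)) * ⟪ψ n, f⟫_ℂ) * ⟪x, φ n⟫_ℂ‖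
          ≤ ∑' n, ‖(((m n : ℂ) - (c : ℂ)) * ⟪ψ n, f⟫_ℂ) * ⟪x, φ n⟫_ℂ‖ :=
            norm_tsum_le_tsum_norm hsumnorm
        _ ≤ ∑' n, ((s - i) / 2) * (u n * v n) :=
            hsumnorm.tsum_le_tsum hterm (hsumuv.mul_left _)
        _ = ((s - i) / 2) * ∑' n, u n * v n := tsum_mul_left
        _ ≤ ((s - i) / 2) * (Real.sqrt (∑' n, u n ^ 2) * Real.sqrt (∑' n, v n ^ 2)) := by
            gcongr
        _ = ((s - i) / 2) * (Real.sqrt Sψ * Real.sqrt Sφ) := by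
            rw [hSψ.tsum_eq, hSφ.tsum_eq]
        _ ≤ ((s - i) / 2) * ((Real.sqrt Bψ * ‖f‖) * (Real.sqrt Bφ * ‖x‖)) := by
            gcongr ((s - i) / 2) * (?_ * ?_)
            · calc Real.sqrt Sψ ≤ Real.sqrt (Bψ * ‖f‖ ^ 2) := Real.sqrt_le_sqrt hSψB
                _ = Real.sqrt Bψ * ‖f‖ := by
                    rw [Real.sqrt_mul' _ (sq_nonneg _), Real.sqrt_sq (norm_nonneg _)]
            · calc Real.sqrt Sφ ≤ Real.sqrt (Bφ * ‖x‖ ^ 2) := Real.sqrt_le_sqrt hSφB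
                _ = Real.sqrt Bφ * ‖x‖ := by
                    rw [Real.sqrt_mul' _ (sq_nonneg _), Real.sqrt_sq (norm_nonneg _)]
        _ = r * ‖f‖ * ‖x‖ := by rw [hr]; ring
    rcases eq_or_lt_of_le (norm_nonneg x) with h0 | h0
    · rw [← h0]; exact mul_nonneg hr0 (norm_nonneg f)
    · have := hkey
      rw [sq] at this
      exact le_of_mul_le_mul_right this h0
  have hTnorm : ‖T‖ ≤ r := T.opNorm_le_bound hr0 hTf
  -- spectral argument
  intro z hz
  rcases subsingleton_or_nontrivial H with hsub | hnt
  · exfalso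
    exact hz (isUnit_of_subsingleton _)
  · have hzT : z - (c : ℂ) ∈ spectrum ℂ T := by
      rw [spectrum.mem_iff] at hz ⊢
      intro hu'
      apply hz
      have : algebraMap ℂ (H →L[ℂ] H) (z - (c : ℂ)) - T = algebraMap ℂ (H →L[ℂ] H) z - M := by
        rw [hT, map_sub, sub_sub_sub_cancel_right]
      rwa [this] at hu'
    have := spectrum.norm_le_norm_of_mem hzT
    rw [Metric.mem_closedBall, dist_eq_norm]
    calc ‖z - ((c : ℝ) : ℂ)‖ ≤ ‖T‖ := this
      _ ≤ r := hTnorm
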